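/- Let {y_k}, {u_k}, {a_k}, {b_k} be sequences of nonnegative random variables adapted to a filtration {F_k} such that almost surely Σ a_k < ∞, Σ b_k < ∞, and E[y_{k+1} | F_k] ≤ (1 + a_k) y_k − u_k + b_k for all k. Then almost surely {y_k} converges and Σ u_k < ∞. -/

import Mathlib

open MeasureTheory Filter Topology
section RSAux

variable {Ω : Type*}

/-- Product `∏_{j<k} (1 + a_j)`. -/
noncomputable def rsA (a : ℕ → Ω → ℝ) (k : ℕ) (ω : Ω) : ℝ :=
  ∏ j ∈ Finset.range k, (1 + a j ω)

/-- Indicator that the partial sums of `a + b` up to time `k` stay below `M`. -/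
noncomputable def rsP (a b : ℕ → Ω → ℝ) (M : ℝ) (k : ℕ) (ω : Ω) : ℝ :=
  if (∑ j ∈ Finset.range k, (a j ω + b j ω)) ≤ M then 1 else 0

/-- The stopped almost-supermartingale. -/
noncomputable def rsX (y u a b : ℕ → Ω → ℝ) (M : ℝ) (k : ℕ) (ω : Ω) : ℝ :=
  y 0 ω + ∑ j ∈ Finset.range k, rsP a b M (j + 1) ω *
    (y (j + 1) ω / rsA a (j + 1) ω - y j ω / rsA a j ω
      + (u j ω - b j ω) / rsA a (j + 1) ω)

variable {a b y u : ℕ → Ω → ℝ} {M : ℝ} {ω : Ω}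

lemma rsA_pos (ha : ∀ j, 0 ≤ a j ω) (k : ℕ) : 0 < rsA a k ω :=
  Finset.prod_pos fun j _ => by linarith [ha j]

lemma rsA_one_le (ha : ∀ j, 0 ≤ a j ω) (k : ℕ) : 1 ≤ rsA a k ω := by
  unfold rsA
  calc (1:ℝ) = ∏ _j ∈ Finset.range k, 1 := by simp
    _ ≤ ∏ j ∈ Finset.range k, (1 + a j ω) :=
      Finset.prod_le_prod (by norm_num) (fun j _ => by linarith [ha j])

lemma rsA_succ (k : ℕ) : rsA a (k + 1) ω = rsA a k ω * (1 + a k ω) :=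
  Finset.prod_range_succ _ _

lemma rsA_mono (ha : ∀ j, 0 ≤ a j ω) : Monotone fun k => rsA a k ω :=
  monotone_nat_of_le_succ fun k => by
    rw [rsA_succ]
    nlinarith [rsA_pos ha k, ha k]

lemma rsA_le_exp (ha : ∀ j, 0 ≤ a j ω) (k : ℕ) : rsA a k ω ≤ Real.exp (∑ j ∈ Finset.range k, a j ω) := by
  rw [Real.exp_sum]
  exact Finset.prod_le_prod (fun j _ => by linarith [ha j])
    (fun j _ => by linarith [Real.add_one_le_exp (a j ω)])

lemma rsP_nonneg (k : ℕ) : 0 ≤ rsP a b M k ω := by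
  unfold rsP; split <;> norm_num

lemma rsP_le_one (k : ℕ) : rsP a b M k ω ≤ 1 := by
  unfold rsP; split <;> norm_num

lemma rsP_eq_one_iff {k : ℕ} :
    rsP a b M k ω = 1 ↔ (∑ j ∈ Finset.range k, (a j ω + b j ω)) ≤ M := by
  unfold rsP; split <;> simp_all

lemma rsP_eq_or (k : ℕ) : rsP a b M k ω = 0 ∨ rsP a b M k ω = 1 := by
  unfold rsP; split <;> simp

/-- The indicator is antitone in `k` (given nonnegativity). -/
lemma rsP_antitone (ha : ∀ j, 0 ≤ a j ω) (hb : ∀ j, 0 ≤ b j ω) {j k : ℕ} (hjk : j ≤ k)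
    (h : rsP a b M k ω = 1) : rsP a b M j ω = 1 := by
  rw [rsP_eq_one_iff] at h ⊢
  refine le_trans ?_ h
  exact Finset.sum_le_sum_of_subset_of_nonneg (Finset.range_subset_range.2 hjk)
    (fun i _ _ => by linarith [ha i, hb i])

lemma rsP_mul_a_le (ha : ∀ j, 0 ≤ a j ω) (hb : ∀ j, 0 ≤ b j ω) (hM : 0 ≤ M) (k : ℕ) :
    rsP a b M (k + 1) ω * a k ω ≤ M := by
  rcases rsP_eq_or (a := a) (b := b) (M := M) (ω := ω) (k + 1) with h | h
  · rw [h, zero_mul]; exact hM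
  · rw [h, one_mul]
    rw [rsP_eq_one_iff] at h
    have h1 : a k ω + b k ω ≤ ∑ j ∈ Finset.range (k + 1), (a j ω + b j ω) :=
      Finset.single_le_sum (f := fun j => a j ω + b j ω)
        (fun i _ => by show (0:ℝ) ≤ a i ω + b i ω; linarith [ha i, hb i])
        (Finset.self_mem_range_succ k)
    linarith [hb k]

lemma rsP_mul_b_le (ha : ∀ j, 0 ≤ a j ω) (hb : ∀ j, 0 ≤ b j ω) (hM : 0 ≤ M) (k : ℕ) :
    rsP a b M (k + 1) ω * b k ω ≤ M := by
  rcases rsP_eq_or (a := a) (b := b) (M := M) (ω := ω) (k + 1) with h | h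
  · rw [h, zero_mul]; exact hM
  · rw [h, one_mul]
    rw [rsP_eq_one_iff] at h
    have h1 : a k ω + b k ω ≤ ∑ j ∈ Finset.range (k + 1), (a j ω + b j ω) :=
      Finset.single_le_sum (f := fun j => a j ω + b j ω)
        (fun i _ => by show (0:ℝ) ≤ a i ω + b i ω; linarith [ha i, hb i])
        (Finset.self_mem_range_succ k)
    linarith [ha k]

/-- Sum of indicator-weighted `b`'s is at most `M`. -/
lemma rsP_sum_b_le (ha : ∀ j, 0 ≤ a j ω) (hb : ∀ j, 0 ≤ b j ω) (hM : 0 ≤ M) (k : ℕ) :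
    ∑ j ∈ Finset.range k, rsP a b M (j + 1) ω * b j ω ≤ M := by
  induction k with
  | zero => simpa using hM
  | succ k ih =>
    rw [Finset.sum_range_succ]
    rcases rsP_eq_or (a := a) (b := b) (M := M) (ω := ω) (k + 1) with h | h
    · rw [h, zero_mul, add_zero]; exact ih
    · -- all indicators up to k are 1
      have hall : ∀ j ∈ Finset.range (k + 1), rsP a b M (j + 1) ω * b j ω = b j ω := by
        intro j hj
        rw [rsP_antitone ha hb (Nat.succ_le_succ (Nat.lt_succ_iff.1 (Finset.mem_range.1 hj))) h,
          one_mul]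
      rw [← Finset.sum_range_succ]
      rw [Finset.sum_congr rfl hall]
      rw [rsP_eq_one_iff] at h
      refine le_trans ?_ h
      exact Finset.sum_le_sum fun i _ => by linarith [ha i, hb i]

/-- Key lower bound on the stopped process. -/
lemma rsX_lower (ha : ∀ j, 0 ≤ a j ω) (hb : ∀ j, 0 ≤ b j ω) (hu : ∀ j, 0 ≤ u j ω)
    (hy : ∀ j, 0 ≤ y j ω) (hM : 0 ≤ M) (k : ℕ) :
    -M ≤ rsX y u a b M k ω := by
  have hz : ∀ j, 0 ≤ y j ω / rsA a j ω := fun j => div_nonneg (hy j) (rsA_pos ha j).le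
  have key : ∀ k, rsP a b M k ω * (y k ω / rsA a k ω)
      - ∑ j ∈ Finset.range k, rsP a b M (j + 1) ω * (b j ω / rsA a (j + 1) ω)
      ≤ rsX y u a b M k ω := by
    intro k
    induction k with
    | zero =>
      simp only [rsX, Finset.range_zero, Finset.sum_empty, add_zero]
      have h0 : rsA a 0 ω = 1 := by simp [rsA]
      rcases rsP_eq_or (a := a) (b := b) (M := M) (ω := ω) 0 with h | h <;>
        simp [h, h0, hy 0]
    | succ k ih =>
      have hXs : rsX y u a b M (k + 1) ω = rsX y u a b M k ω
          + rsP a b M (k + 1) ω * (y (k + 1) ω / rsA a (k + 1) ω - y k ω / rsA a k ω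
            + (u k ω - b k ω) / rsA a (k + 1) ω) := by
        simp [rsX, Finset.sum_range_succ]; ring
      rw [hXs, Finset.sum_range_succ]
      have hstep : rsP a b M (k + 1) ω * (y (k + 1) ω / rsA a (k + 1) ω)
          ≤ rsP a b M k ω * (y k ω / rsA a k ω)
            + rsP a b M (k + 1) ω * (y (k + 1) ω / rsA a (k + 1) ω - y k ω / rsA a k ω) := by
        rcases rsP_eq_or (a := a) (b := b) (M := M) (ω := ω) (k + 1) with h | h
        · rw [h]
          simp only [zero_mul, add_zero, zero_add]
          exact mul_nonneg (rsP_nonneg _) (hz k)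
        · rw [h, rsP_antitone ha hb (Nat.le_succ k) h]; linarith
      have huterm : 0 ≤ rsP a b M (k + 1) ω * (u k ω / rsA a (k + 1) ω) :=
        mul_nonneg (rsP_nonneg _) (div_nonneg (hu k) (rsA_pos ha (k + 1)).le)
      have hsplit : rsP a b M (k + 1) ω * ((u k ω - b k ω) / rsA a (k + 1) ω)
          = rsP a b M (k + 1) ω * (u k ω / rsA a (k + 1) ω)
            - rsP a b M (k + 1) ω * (b k ω / rsA a (k + 1) ω) := by ring
      nlinarith [ih, hstep, huterm, hsplit]
  refine le_trans ?_ (key k)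
  have h1 : 0 ≤ rsP a b M k ω * (y k ω / rsA a k ω) := mul_nonneg (rsP_nonneg _) (hz k)
  have h2 : ∑ j ∈ Finset.range k, rsP a b M (j + 1) ω * (b j ω / rsA a (j + 1) ω) ≤ M := by
    refine le_trans (Finset.sum_le_sum fun j _ => ?_) (rsP_sum_b_le ha hb hM k)
    have hP := rsP_nonneg (a := a) (b := b) (M := M) (ω := ω) (j + 1)
    have h1α := rsA_one_le ha (j + 1)
    have hbj := hb j
    have : b j ω / rsA a (j + 1) ω ≤ b j ω := by
      rw [div_le_iff₀ (by linarith)]; nlinarith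
    nlinarith
  linarith

end RSAux

/-- Robbins–Siegmund almost-supermartingale convergence theorem (Theorem 2.1):
if nonnegative adapted sequences satisfy
`E[y_{k+1} | F_k] ≤ (1 + a_k) y_k - u_k + b_k` with a.s. `Σ a_k < ∞` and `Σ b_k < ∞`,
then a.s. `{y_k}` converges and `Σ u_k < ∞`. -/
theorem robbins_siegmund
    {Ω : Type*} {m : MeasurableSpace Ω} {μ : Measure Ω} [IsProbabilityMeasure μ]
    (ℱ : Filtration ℕ m)
    (y u a b : ℕ → Ω → ℝ)
    (hy_adapted : Adapted ℱ y) (hu_adapted : Adapted ℱ u)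
    (ha_adapted : Adapted ℱ a) (hb_adapted : Adapted ℱ b)
    (hy_int : ∀ k, Integrable (y k) μ)
    (hy_nonneg : ∀ k, 0 ≤ᵐ[μ] y k) (hu_nonneg : ∀ k, 0 ≤ᵐ[μ] u k)
    (ha_nonneg : ∀ k, 0 ≤ᵐ[μ] a k) (hb_nonneg : ∀ k, 0 ≤ᵐ[μ] b k)
    (ha_sum : ∀ᵐ ω ∂μ, Summable fun k => a k ω)
    (hb_sum : ∀ᵐ ω ∂μ, Summable fun k => b k ω)
    (hrec : ∀ k, ∀ᵐ ω ∂μ, (μ[y (k + 1)|ℱ k]) ω ≤ (1 + a k ω) * y k ω - u k ω + b k ω) :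
    ∀ᵐ ω ∂μ, (∃ l : ℝ, Tendsto (fun k => y k ω) atTop (nhds l)) ∧
      Summable fun k => u k ω := by
  -- a.e. nonnegativity, all indices at once
  have haeA : ∀ᵐ ω ∂μ, ∀ k, 0 ≤ a k ω := ae_all_iff.2 ha_nonneg
  have haeB : ∀ᵐ ω ∂μ, ∀ k, 0 ≤ b k ω := ae_all_iff.2 hb_nonneg
  have haeU : ∀ᵐ ω ∂μ, ∀ k, 0 ≤ u k ω := ae_all_iff.2 hu_nonneg
  have haeY : ∀ᵐ ω ∂μ, ∀ k, 0 ≤ y k ω := ae_all_iff.2 hy_nonneg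
  -- measurability
  have hym : ∀ k, Measurable (y k) := fun k => (hy_adapted k).mono (ℱ.le k) le_rfl
  have hum : ∀ k, Measurable (u k) := fun k => (hu_adapted k).mono (ℱ.le k) le_rfl
  have ham : ∀ k, Measurable (a k) := fun k => (ha_adapted k).mono (ℱ.le k) le_rfl
  have hbm : ∀ k, Measurable (b k) := fun k => (hb_adapted k).mono (ℱ.le k) le_rfl
  have hAmF : ∀ (k n : ℕ), n ≤ k + 1 → Measurable[ℱ k] (rsA a n) := by
    intro k n hn
    unfold rsA
    refine Finset.measurable_prod _ fun j hj => measurable_const.add ?_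
    have hjk : j ≤ k := by
      have := Finset.mem_range.1 hj; omega
    exact ((ha_adapted j).mono (ℱ.mono hjk) le_rfl)
  have hAm : ∀ n, Measurable (rsA a n) := fun n => (hAmF n n (Nat.le_succ n)).mono (ℱ.le n) le_rfl
  have hPmF : ∀ (M : ℝ) (k n : ℕ), n ≤ k + 1 → Measurable[ℱ k] (rsP a b M n) := by
    intro M k n hn
    unfold rsP
    refine Measurable.ite (measurableSet_le (Finset.measurable_sum _ fun j hj => ?_)
      measurable_const) measurable_const measurable_const
    have hjk : j ≤ k := by
      have := Finset.mem_range.1 hj; omega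
    exact (((ha_adapted j).mono (ℱ.mono hjk) le_rfl).add
      ((hb_adapted j).mono (ℱ.mono hjk) le_rfl))
  have hPm : ∀ (M : ℝ) n, Measurable (rsP a b M n) :=
    fun M n => (hPmF M n n (Nat.le_succ n)).mono (ℱ.le n) le_rfl
  -- the main convergence result for each level M
  have main : ∀ M : ℕ, ∀ᵐ ω ∂μ,
      ∃ c, Tendsto (fun n => rsX y u a b (M : ℝ) n ω) atTop (𝓝 c) := by
    intro M
    have hM0 : (0 : ℝ) ≤ (M : ℝ) := Nat.cast_nonneg M
    -- integrability of the pieces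
    have hf1 : ∀ j n : ℕ, Integrable (fun ω => rsP a b (M:ℝ) n ω * (y j ω / rsA a j ω)) μ := by
      intro j n
      refine Integrable.mono' (hy_int j).norm
        ((hPm _ n).mul ((hym j).div (hAm j))).aestronglyMeasurable ?_
      filter_upwards [haeA] with ω hA
      have h1 := rsA_one_le hA j
      have h2 := rsP_nonneg (a := a) (b := b) (M := (M:ℝ)) (ω := ω) n
      have h3 := rsP_le_one (a := a) (b := b) (M := (M:ℝ)) (ω := ω) n
      rw [norm_mul, norm_div]
      have : ‖y j ω‖ / ‖rsA a j ω‖ ≤ ‖y j ω‖ := by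
        rw [Real.norm_eq_abs (rsA a j ω), abs_of_pos (rsA_pos hA j)]
        exact div_le_self (norm_nonneg _) h1
      have h4 : ‖rsP a b (M:ℝ) n ω‖ ≤ 1 := by rw [Real.norm_eq_abs, abs_of_nonneg h2]; exact h3
      calc ‖rsP a b (M:ℝ) n ω‖ * (‖y j ω‖ / ‖rsA a j ω‖)
          ≤ 1 * ‖y j ω‖ := by
            exact mul_le_mul h4 this (by positivity) (by norm_num)
        _ = ‖y j ω‖ := one_mul _
    have hf3 : ∀ k : ℕ,
        Integrable (fun ω => rsP a b (M:ℝ) (k+1) ω * (u k ω / rsA a (k+1) ω)) μ := by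
      intro k
      refine Integrable.mono'
        (g := fun ωx : Ω => (1 + (M:ℝ)) * y k ωx + (M:ℝ) + |(μ[y (k + 1)|ℱ k]) ωx|) ?_
        ((hPm _ (k+1)).mul ((hum k).div (hAm (k+1)))).aestronglyMeasurable ?_
      · exact (((hy_int k).const_mul _).add (integrable_const _)).add
          integrable_condExp.abs
      filter_upwards [haeA, haeB, haeU, haeY, hrec k] with ω hA hB hU hY hr
      have hαpos := rsA_pos hA (k + 1)
      have hα1 := rsA_one_le hA (k + 1)
      have hP0 := rsP_nonneg (a := a) (b := b) (M := (M:ℝ)) (ω := ω) (k+1)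
      have hP1 := rsP_le_one (a := a) (b := b) (M := (M:ℝ)) (ω := ω) (k+1)
      have hPa := rsP_mul_a_le hA hB hM0 k
      have hPb := rsP_mul_b_le hA hB hM0 k
      have hnn : 0 ≤ rsP a b (M:ℝ) (k+1) ω * (u k ω / rsA a (k+1) ω) :=
        mul_nonneg hP0 (div_nonneg (hU k) hαpos.le)
      rw [Real.norm_eq_abs, abs_of_nonneg hnn]
      have hle1 : rsP a b (M:ℝ) (k+1) ω * (u k ω / rsA a (k+1) ω)
          ≤ rsP a b (M:ℝ) (k+1) ω * u k ω := by
        refine mul_le_mul_of_nonneg_left ?_ hP0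
        exact div_le_self (hU k) hα1
      have hle2 : rsP a b (M:ℝ) (k+1) ω * u k ω
          ≤ (1 + (M:ℝ)) * y k ω + (M:ℝ) + |(μ[y (k + 1)|ℱ k]) ω| := by
        have hu_le : u k ω ≤ (1 + a k ω) * y k ω + b k ω - (μ[y (k + 1)|ℱ k]) ω := by linarith
        have h5 : rsP a b (M:ℝ) (k+1) ω * u k ω
            ≤ rsP a b (M:ℝ) (k+1) ω * ((1 + a k ω) * y k ω + b k ω - (μ[y (k + 1)|ℱ k]) ω) :=
          mul_le_mul_of_nonneg_left hu_le hP0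
        have h6 : rsP a b (M:ℝ) (k+1) ω * ((1 + a k ω) * y k ω)
            ≤ (1 + (M:ℝ)) * y k ω := by nlinarith [hY k]
        have h7 : rsP a b (M:ℝ) (k+1) ω * (-(μ[y (k + 1)|ℱ k]) ω) ≤ |(μ[y (k + 1)|ℱ k]) ω| := by
          have := abs_nonneg ((μ[y (k + 1)|ℱ k]) ω)
          have := neg_abs_le ((μ[y (k + 1)|ℱ k]) ω)
          nlinarith
        nlinarith
      linarith
    have hf4 : ∀ k : ℕ,
        Integrable (fun ω => rsP a b (M:ℝ) (k+1) ω * (b k ω / rsA a (k+1) ω)) μ := by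
      intro k
      refine Integrable.mono' (integrable_const (M:ℝ))
        ((hPm _ (k+1)).mul ((hbm k).div (hAm (k+1)))).aestronglyMeasurable ?_
      filter_upwards [haeA, haeB] with ω hA hB
      have hαpos := rsA_pos hA (k + 1)
      have hα1 := rsA_one_le hA (k + 1)
      have hP0 := rsP_nonneg (a := a) (b := b) (M := (M:ℝ)) (ω := ω) (k+1)
      have hPb := rsP_mul_b_le hA hB hM0 k
      have hnn : 0 ≤ rsP a b (M:ℝ) (k+1) ω * (b k ω / rsA a (k+1) ω) :=
        mul_nonneg hP0 (div_nonneg (hB k) hαpos.le)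
      rw [Real.norm_eq_abs, abs_of_nonneg hnn]
      have : rsP a b (M:ℝ) (k+1) ω * (b k ω / rsA a (k+1) ω)
          ≤ rsP a b (M:ℝ) (k+1) ω * b k ω :=
        mul_le_mul_of_nonneg_left (div_le_self (hB k) hα1) hP0
      linarith
    -- W is the predictable part subtracted
    have hWint : ∀ k : ℕ, Integrable (fun ω => rsP a b (M:ℝ) (k+1) ω *
        (y k ω / rsA a k ω - (u k ω - b k ω) / rsA a (k+1) ω)) μ := by
      intro k
      have := ((hf1 k (k+1)).sub (hf3 k)).add (hf4 k)
      refine this.congr (Eventually.of_forall fun ω => ?_)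
      simp only [Pi.add_apply, Pi.sub_apply]
      ring
    have hXint : ∀ n : ℕ, Integrable (rsX y u a b (M:ℝ) n) μ := by
      intro n
      induction n with
      | zero =>
        refine (hy_int 0).congr (Eventually.of_forall fun ω => ?_)
        simp [rsX]
      | succ n ih =>
        have hterm : Integrable (fun ω => rsP a b (M:ℝ) (n+1) ω *
            (y (n+1) ω / rsA a (n+1) ω - y n ω / rsA a n ω
              + (u n ω - b n ω) / rsA a (n+1) ω)) μ := by
          have := ((hf1 (n+1) (n+1)).sub (hf1 n (n+1))|>.add (hf3 n)).sub (hf4 n)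
          refine this.congr (Eventually.of_forall fun ω => ?_)
          simp only [Pi.add_apply, Pi.sub_apply]
          ring
        refine (ih.add hterm).congr (Eventually.of_forall fun ω => ?_)
        simp [rsX, Finset.sum_range_succ]
        ring
    -- adaptedness
    have hXadp : Adapted ℱ (rsX y u a b (M:ℝ)) := by
      intro n
      have : Measurable[ℱ n] (rsX y u a b (M:ℝ) n) := by
        unfold rsX
        refine Measurable.add ((hy_adapted 0).mono (ℱ.mono (Nat.zero_le n)) le_rfl) ?_
        refine Finset.measurable_sum _ fun j hj => ?_
        have hjn : j + 1 ≤ n := Finset.mem_range.1 hj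
        refine Measurable.mul (hPmF _ n (j+1) (by omega)) ?_
        have hy1 : Measurable[ℱ n] (y (j+1)) := (hy_adapted (j+1)).mono (ℱ.mono hjn) le_rfl
        have hy0 : Measurable[ℱ n] (y j) := (hy_adapted j).mono (ℱ.mono (by omega)) le_rfl
        have hu0 : Measurable[ℱ n] (u j) := (hu_adapted j).mono (ℱ.mono (by omega)) le_rfl
        have hb0 : Measurable[ℱ n] (b j) := (hb_adapted j).mono (ℱ.mono (by omega)) le_rfl
        have hA1 : Measurable[ℱ n] (rsA a (j+1)) := hAmF n (j+1) (by omega)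
        have hA0 : Measurable[ℱ n] (rsA a j) := hAmF n j (by omega)
        exact ((hy1.div hA1).sub (hy0.div hA0)).add ((hu0.sub hb0).div hA1)
      exact this
    -- the supermartingale property
    have hXsuper : Supermartingale (rsX y u a b (M:ℝ)) ℱ μ := by
      refine supermartingale_nat hXadp.stronglyAdapted hXint fun k => ?_
      set F : Ω → ℝ := fun ω => rsP a b (M:ℝ) (k+1) ω / rsA a (k+1) ω with hF
      set W : Ω → ℝ := fun ω => rsP a b (M:ℝ) (k+1) ω *
        (y k ω / rsA a k ω - (u k ω - b k ω) / rsA a (k+1) ω) with hW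
      have hdecomp : rsX y u a b (M:ℝ) (k+1)
          = (fun ω => rsX y u a b (M:ℝ) k ω - W ω) + F * y (k+1) := by
        funext ω
        simp only [Pi.add_apply, Pi.mul_apply, hF, hW, rsX, Finset.sum_range_succ]
        ring
      have hFmeas : StronglyMeasurable[ℱ k] F :=
        ((hPmF _ k (k+1) le_rfl).div (hAmF k (k+1) le_rfl)).stronglyMeasurable
      have hFy_int : Integrable (F * y (k+1)) μ := by
        have := hf1 (k+1) (k+1)
        refine this.congr (Eventually.of_forall fun ω => ?_)
        simp only [Pi.mul_apply, hF]
        ring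
      have hg1_int : Integrable (fun ω => rsX y u a b (M:ℝ) k ω - W ω) μ :=
        (hXint k).sub (hWint k)
      have hg1_meas : StronglyMeasurable[ℱ k] (fun ω => rsX y u a b (M:ℝ) k ω - W ω) := by
        refine StronglyMeasurable.sub (hXadp k).stronglyMeasurable ?_
        have : Measurable[ℱ k] W := by
          refine (hPmF _ k (k+1) le_rfl).mul ?_
          have hy0 : Measurable[ℱ k] (y k) := (hy_adapted k)
          have hu0 : Measurable[ℱ k] (u k) := (hu_adapted k)
          have hb0 : Measurable[ℱ k] (b k) := (hb_adapted k)
          exact (hy0.div (hAmF k k (by omega))).sub ((hu0.sub hb0).div (hAmF k (k+1) le_rfl))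
        exact this.stronglyMeasurable
      calc μ[rsX y u a b (M:ℝ) (k+1)|ℱ k]
          =ᵐ[μ] μ[(fun ω => rsX y u a b (M:ℝ) k ω - W ω)|ℱ k] + μ[F * y (k+1)|ℱ k] := by
            rw [hdecomp]; exact condExp_add hg1_int hFy_int _
        _ =ᵐ[μ] (fun ω => rsX y u a b (M:ℝ) k ω - W ω) + F * μ[y (k+1)|ℱ k] := by
            refine EventuallyEq.add ?_ ?_
            · rw [condExp_of_stronglyMeasurable (ℱ.le k) hg1_meas hg1_int]
            · exact condExp_mul_of_stronglyMeasurable_left hFmeas hFy_int (hy_int (k+1))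
        _ ≤ᵐ[μ] rsX y u a b (M:ℝ) k := by
            filter_upwards [haeA, hrec k] with ω hA hr
            simp only [Pi.add_apply, Pi.mul_apply, hF, hW]
            have hαpos := rsA_pos hA k
            have h1a : (0:ℝ) < 1 + a k ω := by linarith [hA k]
            have hα'pos := rsA_pos hA (k+1)
            have hP0 := rsP_nonneg (a := a) (b := b) (M := (M:ℝ)) (ω := ω) (k+1)
            have hFE : rsP a b (M:ℝ) (k+1) ω / rsA a (k+1) ω * (μ[y (k + 1)|ℱ k]) ω
                ≤ rsP a b (M:ℝ) (k+1) ω / rsA a (k+1) ω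
                  * ((1 + a k ω) * y k ω - u k ω + b k ω) :=
              mul_le_mul_of_nonneg_left hr (div_nonneg hP0 hα'pos.le)
            have hWeq : rsP a b (M:ℝ) (k+1) ω / rsA a (k+1) ω
                  * ((1 + a k ω) * y k ω - u k ω + b k ω)
                = rsP a b (M:ℝ) (k+1) ω *
                  (y k ω / rsA a k ω - (u k ω - b k ω) / rsA a (k+1) ω) := by
              rw [rsA_succ]
              field_simp
              ring
            linarith
    -- L¹ bound
    set C : ℝ := ∫ ω, y 0 ω ∂μ + 2 * (M:ℝ) with hC
    have hbdd : ∀ n, eLpNorm (rsX y u a b (M:ℝ) n) 1 μ ≤ ENNReal.ofReal C := by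
      intro n
      rw [eLpNorm_one_eq_lintegral_enorm,
        ← ofReal_integral_norm_eq_lintegral_enorm (hXint n)]
      refine ENNReal.ofReal_le_ofReal ?_
      have h1 : ∫ ω, ‖rsX y u a b (M:ℝ) n ω‖ ∂μ
          ≤ ∫ ω, (rsX y u a b (M:ℝ) n ω + 2 * (M:ℝ)) ∂μ := by
        refine integral_mono_ae (hXint n).norm ((hXint n).add (integrable_const _)) ?_
        filter_upwards [haeA, haeB, haeU, haeY] with ω hA hB hU hY
        have := rsX_lower (y := y) (u := u) hA hB hU hY hM0 n
        rw [Real.norm_eq_abs]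
        rw [abs_le]
        constructor <;> linarith
      have h2 : ∫ ω, (rsX y u a b (M:ℝ) n ω + 2 * (M:ℝ)) ∂μ
          = ∫ ω, rsX y u a b (M:ℝ) n ω ∂μ + 2 * (M:ℝ) := by
        rw [integral_add (hXint n) (integrable_const _), integral_const]
        simp
      have h3 : ∫ ω, rsX y u a b (M:ℝ) n ω ∂μ ≤ ∫ ω, rsX y u a b (M:ℝ) 0 ω ∂μ := by
        rw [← integral_condExp (ℱ.le 0) (f := rsX y u a b (M:ℝ) n)]
        exact integral_mono_ae integrable_condExp (hXint 0)
          (hXsuper.condExp_ae_le (Nat.zero_le n))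
      have h4 : ∫ ω, rsX y u a b (M:ℝ) 0 ω ∂μ = ∫ ω, y 0 ω ∂μ := by
        refine integral_congr_ae (Eventually.of_forall fun ω => ?_)
        simp [rsX]
      rw [hC]
      linarith
    -- convergence
    have hneg : Submartingale (-rsX y u a b (M:ℝ)) ℱ μ := hXsuper.neg
    have hbdd' : ∀ n, eLpNorm ((-rsX y u a b (M:ℝ)) n) 1 μ ≤ C.toNNReal := by
      intro n
      have : (-rsX y u a b (M:ℝ)) n = -(rsX y u a b (M:ℝ) n) := rfl
      rw [this, eLpNorm_neg]
      calc eLpNorm (rsX y u a b (M:ℝ) n) 1 μ ≤ ENNReal.ofReal C := hbdd n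
        _ = (C.toNNReal : ENNReal) := rfl
    filter_upwards [hneg.exists_ae_tendsto_of_bdd hbdd'] with ω hω
    obtain ⟨c, hc⟩ := hω
    refine ⟨-c, ?_⟩
    have : (fun n => rsX y u a b (M:ℝ) n ω) = fun n => -((-rsX y u a b (M:ℝ)) n ω) := by
      funext n; simp
    rw [this]
    exact hc.neg
  -- Final assembly
  filter_upwards [ha_sum, hb_sum, haeA, haeB, haeU, haeY, ae_all_iff.2 main]
    with ω hsa hsb hA hB hU hY hconv
  obtain ⟨M, hM⟩ := exists_nat_ge (∑' k, a k ω + ∑' k, b k ω)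
  have hP1 : ∀ k, rsP a b (M:ℝ) k ω = 1 := by
    intro k
    rw [rsP_eq_one_iff]
    have h1 : ∑ j ∈ Finset.range k, (a j ω + b j ω)
        = ∑ j ∈ Finset.range k, a j ω + ∑ j ∈ Finset.range k, b j ω :=
      Finset.sum_add_distrib
    have h2 : ∑ j ∈ Finset.range k, a j ω ≤ ∑' j, a j ω :=
      Summable.sum_le_tsum _ (fun i _ => hA i) hsa
    have h3 : ∑ j ∈ Finset.range k, b j ω ≤ ∑' j, b j ω :=
      Summable.sum_le_tsum _ (fun i _ => hB i) hsb
    linarith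
  have hXeq : ∀ n, rsX y u a b (M:ℝ) n ω = y n ω / rsA a n ω
      + (∑ j ∈ Finset.range n, u j ω / rsA a (j+1) ω)
      - ∑ j ∈ Finset.range n, b j ω / rsA a (j+1) ω := by
    intro n
    have h1 : ∑ j ∈ Finset.range n, rsP a b (M:ℝ) (j + 1) ω *
        (y (j + 1) ω / rsA a (j + 1) ω - y j ω / rsA a j ω
          + (u j ω - b j ω) / rsA a (j + 1) ω)
        = ∑ j ∈ Finset.range n, ((y (j+1) ω / rsA a (j+1) ω - y j ω / rsA a j ω)
          + (u j ω / rsA a (j+1) ω - b j ω / rsA a (j+1) ω)) := by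
      refine Finset.sum_congr rfl fun j _ => ?_
      rw [hP1 (j+1), one_mul, sub_div]
    have h2 : rsA a 0 ω = 1 := by simp [rsA]
    rw [rsX, h1, Finset.sum_add_distrib,
      Finset.sum_range_sub (f := fun j => y j ω / rsA a j ω), Finset.sum_sub_distrib, h2]
    ring
  have hαpos : ∀ k, 0 < rsA a k ω := rsA_pos hA
  have hα1 : ∀ k, 1 ≤ rsA a k ω := rsA_one_le hA
  have hαexp : ∀ k, rsA a k ω ≤ Real.exp ((M:ℝ)) := by
    intro k
    refine (rsA_le_exp hA k).trans (Real.exp_le_exp.2 ?_)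
    have h2 : ∑ j ∈ Finset.range k, a j ω ≤ ∑' j, a j ω :=
      Summable.sum_le_tsum _ (fun i _ => hA i) hsa
    have h3 : (0:ℝ) ≤ ∑' k, b k ω := tsum_nonneg hB
    linarith
  have hbsum' : Summable fun j => b j ω / rsA a (j+1) ω :=
    Summable.of_nonneg_of_le (fun j => div_nonneg (hB j) (hαpos (j+1)).le)
      (fun j => div_le_self (hB j) (hα1 (j+1))) hsb
  have hBtend : Tendsto (fun n => ∑ j ∈ Finset.range n, b j ω / rsA a (j+1) ω) atTop
      (𝓝 (∑' j, b j ω / rsA a (j+1) ω)) :=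
    hbsum'.hasSum.tendsto_sum_nat
  obtain ⟨c, hc⟩ := hconv M
  have hzU : Tendsto (fun n => y n ω / rsA a n ω
      + ∑ j ∈ Finset.range n, u j ω / rsA a (j+1) ω) atTop
      (𝓝 (c + ∑' j, b j ω / rsA a (j+1) ω)) := by
    refine (hc.add hBtend).congr fun n => ?_
    rw [hXeq n]
    ring
  obtain ⟨D, hD⟩ := hzU.bddAbove_range
  simp only [mem_upperBounds, Set.mem_range, forall_exists_index] at hD
  have hznn : ∀ n, 0 ≤ y n ω / rsA a n ω := fun n => div_nonneg (hY n) (hαpos n).le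
  have hUle : ∀ n, ∑ j ∈ Finset.range n, u j ω / rsA a (j+1) ω ≤ D := by
    intro n
    have := hD (y n ω / rsA a n ω + ∑ j ∈ Finset.range n, u j ω / rsA a (j+1) ω) n rfl
    linarith [hznn n]
  have hUmono : Monotone fun n => ∑ j ∈ Finset.range n, u j ω / rsA a (j+1) ω := by
    refine monotone_nat_of_le_succ fun n => ?_
    rw [Finset.sum_range_succ]
    have : 0 ≤ u n ω / rsA a (n+1) ω := div_nonneg (hU n) (hαpos (n+1)).le
    linarith
  have hUtend : Tendsto (fun n => ∑ j ∈ Finset.range n, u j ω / rsA a (j+1) ω) atTop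
      (𝓝 (⨆ n, ∑ j ∈ Finset.range n, u j ω / rsA a (j+1) ω)) :=
    tendsto_atTop_ciSup hUmono ⟨D, by rintro x ⟨n, rfl⟩; exact hUle n⟩
  have hztend : Tendsto (fun n => y n ω / rsA a n ω) atTop
      (𝓝 (c + (∑' j, b j ω / rsA a (j+1) ω)
        - ⨆ n, ∑ j ∈ Finset.range n, u j ω / rsA a (j+1) ω)) := by
    refine (hzU.sub hUtend).congr fun n => ?_
    ring
  have hαtend : Tendsto (fun k => rsA a k ω) atTop (𝓝 (⨆ k, rsA a k ω)) :=
    tendsto_atTop_ciSup (rsA_mono hA) ⟨Real.exp (M:ℝ), by rintro x ⟨k, rfl⟩; exact hαexp k⟩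
  have hytend : Tendsto (fun k => y k ω) atTop
      (𝓝 ((c + (∑' j, b j ω / rsA a (j+1) ω)
        - ⨆ n, ∑ j ∈ Finset.range n, u j ω / rsA a (j+1) ω) * ⨆ k, rsA a k ω)) := by
    refine (hztend.mul hαtend).congr fun k => ?_
    exact div_mul_cancel₀ _ (hαpos k).ne'
  refine ⟨⟨_, hytend⟩, ?_⟩
  have hUsum : Summable fun j => u j ω / rsA a (j+1) ω :=
    summable_of_sum_range_le (fun j => div_nonneg (hU j) (hαpos (j+1)).le) hUle
  refine Summable.of_nonneg_of_le hU (fun j => ?_) (hUsum.mul_left (Real.exp (M:ℝ)))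
  calc u j ω = u j ω / rsA a (j+1) ω * rsA a (j+1) ω :=
        (div_mul_cancel₀ _ (hαpos (j+1)).ne').symm
    _ ≤ u j ω / rsA a (j+1) ω * Real.exp (M:ℝ) :=
        mul_le_mul_of_nonneg_left (hαexp (j+1)) (div_nonneg (hU j) (hαpos (j+1)).le)
    _ = Real.exp (M:ℝ) * (u j ω / rsA a (j+1) ω) := mul_comm _ _
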